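/- arXiv:1510.00129 — 2 statements merged into one kernel-verified Lean document; each statement's English description precedes it below -/
import Mathlib

section
/- If G is a finite group whose order has exactly four distinct prime divisors, then the coprime graph 𝒫(G) contains a copy of the complete bipartite graph K_{2,3} and a copy of the star K_{1,4} (i.e. there exist injective graph homomorphisms from K_{2,3} and from K_{1,4} into 𝒫(G)). -/
open SimpleGraph

/-- The coprime graph of subgroups of a group `G`: vertices are the proper nontrivial
subgroups of `G`, and two distinct vertices are adjacent iff their orders are coprime. -/
def coprimeGraph (G : Type*) [Group G] :
    SimpleGraph {H : Subgroup G // H ≠ ⊥ ∧ H ≠ ⊤} where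
  Adj H K := H ≠ K ∧ Nat.Coprime (Nat.card H.1) (Nat.card K.1)
  symm := ⟨fun _ _ h => ⟨h.1.symm, h.2.symm⟩⟩
  loopless := ⟨fun _ h => h.1 rfl⟩

section AuxCoprimeGraph

open Subgroup Pointwise

variable {G : Type*} [Group G] [Finite G]

private lemma aux_card_conj (H : Subgroup G) (g : G) :
    Nat.card (H.map (MulAut.conj g).toMonoidHom) = Nat.card H :=
  (Nat.card_congr (H.equivMapOfInjective _ (MulAut.conj g).injective).toEquiv).symm

private lemma aux_card_sup (H K : Subgroup G) [H.Normal] [K.Normal]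
    (hco : Nat.Coprime (Nat.card H) (Nat.card K)) :
    Nat.card (H ⊔ K : Subgroup G) = Nat.card H * Nat.card K := by
  have h1 : Nat.card H ∣ Nat.card (H ⊔ K : Subgroup G) :=
    Subgroup.card_dvd_of_le le_sup_left
  have h2 : Nat.card K ∣ Nat.card (H ⊔ K : Subgroup G) :=
    Subgroup.card_dvd_of_le le_sup_right
  have hdvd := hco.mul_dvd_of_dvd_of_dvd h1 h2
  have hle : Nat.card (H ⊔ K : Subgroup G) ≤ Nat.card H * Nat.card K := by
    calc Nat.card (H ⊔ K : Subgroup G) = Nat.card ((H ⊔ K : Subgroup G) : Set G) := rfl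
      _ = Nat.card ((H : Set G) * (K : Set G)) := by rw [Subgroup.mul_normal H K]
      _ ≤ Nat.card (H : Set G) * Nat.card (K : Set G) := Set.natCard_mul_le
      _ = Nat.card H * Nat.card K := rfl
  exact le_antisymm hle (Nat.le_of_dvd Nat.card_pos hdvd)

private lemma aux_exists_X {p3 p4 : ℕ} (hp3 : p3.Prime) (hp4 : p4.Prime) (hne : p3 ≠ p4)
    (P3 P4 : Subgroup G) (h3 : Nat.card P3 = p3) (h4 : Nat.card P4 = p4) :
    ∃ X : Subgroup G, X ≠ P3 ∧ X ≠ P4 ∧ 1 < Nat.card X ∧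
      ∀ q : ℕ, q.Prime → q ∣ Nat.card X → q = p3 ∨ q = p4 := by
  by_cases hc : ∃ Y : Subgroup G, Nat.card Y = p3 ∧ Y ≠ P3
  · obtain ⟨Y, hY, hYne⟩ := hc
    refine ⟨Y, hYne, fun hEq => hne (by rw [← hY, ← h4, hEq]), hY ▸ hp3.one_lt,
      fun q hq hdq => Or.inl ((Nat.prime_dvd_prime_iff_eq hq hp3).mp (hY ▸ hdq))⟩
  · push_neg at hc
    haveI hn3 : P3.Normal := by
      constructor
      intro x hx g
      have hEq := hc (P3.map (MulAut.conj g).toMonoidHom) (by rw [aux_card_conj, h3])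
      rw [← hEq]
      exact ⟨x, hx, rfl⟩
    by_cases hc4 : ∃ Y : Subgroup G, Nat.card Y = p4 ∧ Y ≠ P4
    · obtain ⟨Y, hY, hYne⟩ := hc4
      refine ⟨Y, fun hEq => hne (by rw [← hY, ← h3, hEq]), hYne, hY ▸ hp4.one_lt,
        fun q hq hdq => Or.inr ((Nat.prime_dvd_prime_iff_eq hq hp4).mp (hY ▸ hdq))⟩
    · push_neg at hc4
      haveI hn4 : P4.Normal := by
        constructor
        intro x hx g
        have hEq := hc4 (P4.map (MulAut.conj g).toMonoidHom) (by rw [aux_card_conj, h4])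
        rw [← hEq]
        exact ⟨x, hx, rfl⟩
      have hco : Nat.Coprime (Nat.card P3) (Nat.card P4) := by
        rw [h3, h4]; exact (Nat.coprime_primes hp3 hp4).mpr hne
      have hcard : Nat.card (P3 ⊔ P4 : Subgroup G) = p3 * p4 := by
        rw [aux_card_sup P3 P4 hco, h3, h4]
      refine ⟨P3 ⊔ P4, ?_, ?_, ?_, ?_⟩
      · intro hEq
        rw [hEq, h3] at hcard
        nlinarith [hp3.two_le, hp4.two_le]
      · intro hEq
        rw [hEq, h4] at hcard
        nlinarith [hp3.two_le, hp4.two_le]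
      · rw [hcard]; exact one_lt_mul_of_lt_of_le hp3.one_lt hp4.one_le
      · intro q hq hdq
        rw [hcard] at hdq
        rcases (Nat.Prime.dvd_mul hq).mp hdq with h | h
        · exact Or.inl ((Nat.prime_dvd_prime_iff_eq hq hp3).mp h)
        · exact Or.inr ((Nat.prime_dvd_prime_iff_eq hq hp4).mp h)

private lemma aux_adj {H K : {H : Subgroup G // H ≠ ⊥ ∧ H ≠ ⊤}}
    (hco : Nat.Coprime (Nat.card H.1) (Nat.card K.1)) : (coprimeGraph G).Adj H K := by
  refine ⟨fun hEq => ?_, hco⟩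
  subst hEq
  have h1 : 1 < Nat.card H.1 := (Subgroup.one_lt_card_iff_ne_bot H.1).mpr H.2.1
  have h2 : Nat.card H.1 = 1 := by
    have := Nat.gcd_self (Nat.card H.1)
    unfold Nat.Coprime at hco
    omega
  omega

private lemma aux_ne_bot_top {H : Subgroup G} {q : ℕ}
    (h1 : 1 < Nat.card H) (hq : q ∣ Nat.card G) (hq2 : ¬ q ∣ Nat.card H) :
    H ≠ ⊥ ∧ H ≠ ⊤ := by
  constructor
  · rintro rfl
    rw [Subgroup.card_bot] at h1
    omega
  · rintro rfl
    rw [Subgroup.card_top] at hq2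
    exact hq2 hq

private lemma aux_embed {V : Type*} {Γ : SimpleGraph V} {a b c d x : V}
    (hab : Γ.Adj a b) (hac : Γ.Adj a c) (had : Γ.Adj a d) (hax : Γ.Adj a x)
    (hbc : Γ.Adj b c) (hbd : Γ.Adj b d) (hbx : Γ.Adj b x)
    (hcd : Γ.Adj c d) (hcx : c ≠ x) (hdx : d ≠ x) :
    (∃ f : completeBipartiteGraph (Fin 2) (Fin 3) →g Γ, Function.Injective f) ∧
      (∃ f : completeBipartiteGraph (Fin 1) (Fin 4) →g Γ, Function.Injective f) := by
  constructor
  · refine ⟨⟨Sum.elim ![a, b] ![c, d, x], ?_⟩, ?_⟩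
    · rintro (i | i) (j | j) hij
      · exact absurd hij (by simp [completeBipartiteGraph])
      · clear hij
        fin_cases i <;> fin_cases j
        · exact hac
        · exact had
        · exact hax
        · exact hbc
        · exact hbd
        · exact hbx
      · clear hij
        fin_cases i <;> fin_cases j
        · exact hac.symm
        · exact hbc.symm
        · exact had.symm
        · exact hbd.symm
        · exact hax.symm
        · exact hbx.symm
      · exact absurd hij (by simp [completeBipartiteGraph])
    · have i2 : Function.Injective ![a, b] := by
        intro i j hij
        fin_cases i <;> fin_cases j <;> simp_all
      have i3 : Function.Injective ![c, d, x] := by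
        intro i j hij
        fin_cases i <;> fin_cases j <;>
          simp_all [hcd.ne, hcx, hdx, Ne.symm hcd.ne, Ne.symm hcx, Ne.symm hdx]
      refine Function.Injective.sumElim i2 i3 ?_
      intro i j
      fin_cases i <;> fin_cases j
      · exact hac.ne
      · exact had.ne
      · exact hax.ne
      · exact hbc.ne
      · exact hbd.ne
      · exact hbx.ne
  · refine ⟨⟨Sum.elim ![a] ![b, c, d, x], ?_⟩, ?_⟩
    · rintro (i | i) (j | j) hij
      · exact absurd hij (by simp [completeBipartiteGraph])
      · clear hij
        fin_cases i <;> fin_cases j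
        · exact hab
        · exact hac
        · exact had
        · exact hax
      · clear hij
        fin_cases i <;> fin_cases j
        · exact hab.symm
        · exact hac.symm
        · exact had.symm
        · exact hax.symm
      · exact absurd hij (by simp [completeBipartiteGraph])
    · have i1 : Function.Injective ![a] := by
        intro i j hij
        fin_cases i <;> fin_cases j <;> rfl
      have i4 : Function.Injective ![b, c, d, x] := by
        intro i j hij
        fin_cases i <;> fin_cases j <;>
          simp_all [hbc.ne, hbd.ne, hbx.ne, hcd.ne, hcx, hdx,
            Ne.symm hbc.ne, Ne.symm hbd.ne, Ne.symm hbx.ne,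
            Ne.symm hcd.ne, Ne.symm hcx, Ne.symm hdx]
      refine Function.Injective.sumElim i1 i4 ?_
      intro i j
      fin_cases i <;> fin_cases j
      · exact hab.ne
      · exact hac.ne
      · exact had.ne
      · exact hax.ne

end AuxCoprimeGraph

set_option maxHeartbeats 2000000 in
theorem coprimeGraph_contains_K23_K14 {G : Type*} [Group G] [Finite G]
    (h : (Nat.card G).primeFactors.card = 4) :
    (∃ f : completeBipartiteGraph (Fin 2) (Fin 3) →g coprimeGraph G,
        Function.Injective f) ∧
      (∃ f : completeBipartiteGraph (Fin 1) (Fin 4) →g coprimeGraph G,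
        Function.Injective f) := by
  classical
  have hcard : Fintype.card ((Nat.card G).primeFactors : Finset ℕ) = 4 := by
    rw [Fintype.card_coe]; exact h
  let e := Fintype.equivFinOfCardEq hcard
  set p : Fin 4 → ℕ := fun i => (e.symm i : ℕ) with hp_def
  have hmem : ∀ i, p i ∈ (Nat.card G).primeFactors := fun i => (e.symm i).2
  have hprime : ∀ i, (p i).Prime := fun i => Nat.prime_of_mem_primeFactors (hmem i)
  have hdvd : ∀ i, p i ∣ Nat.card G := fun i => Nat.dvd_of_mem_primeFactors (hmem i)
  have hpinj : ∀ i j, p i = p j → i = j := fun i j hij =>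
    e.symm.injective (Subtype.ext hij)
  have hpne : ∀ i j, i ≠ j → p i ≠ p j := fun i j hij hEq => hij (hpinj _ _ hEq)
  -- Cauchy subgroups of prime order
  have hex : ∀ i, ∃ P : Subgroup G, Nat.card P = p i := by
    intro i
    haveI : Fact (p i).Prime := ⟨hprime i⟩
    obtain ⟨x, hx⟩ := exists_prime_orderOf_dvd_card' (p i) (hdvd i)
    exact ⟨Subgroup.zpowers x, by rw [Nat.card_zpowers, hx]⟩
  choose P hP using hex
  -- coprimality between the P i
  have hcop : ∀ i j, i ≠ j → Nat.Coprime (Nat.card (P i)) (Nat.card (P j)) := by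
    intro i j hij
    rw [hP i, hP j]
    exact (Nat.coprime_primes (hprime i) (hprime j)).mpr (hpne i j hij)
  -- the extra subgroup X
  obtain ⟨X, hX2, hX3, hX1lt, hXq⟩ :=
    aux_exists_X (hprime 2) (hprime 3) (hpne 2 3 (by decide)) (P 2) (P 3) (hP 2) (hP 3)
  have hXcop : ∀ i, i = 0 ∨ i = 1 → Nat.Coprime (Nat.card (P i)) (Nat.card X) := by
    intro i hi
    rw [hP i]
    refine (Nat.Prime.coprime_iff_not_dvd (hprime i)).mpr fun hd => ?_
    rcases hXq (p i) (hprime i) hd with hq | hq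
    · rcases hi with rfl | rfl
      · exact absurd (hpinj _ _ hq) (by decide)
      · exact absurd (hpinj _ _ hq) (by decide)
    · rcases hi with rfl | rfl
      · exact absurd (hpinj _ _ hq) (by decide)
      · exact absurd (hpinj _ _ hq) (by decide)
  have hnotdvd : ¬ p 0 ∣ Nat.card X := by
    intro hd
    rcases hXq (p 0) (hprime 0) hd with hq | hq
    · exact absurd (hpinj _ _ hq) (by decide)
    · exact absurd (hpinj _ _ hq) (by decide)
  -- vertices
  have hPlt : ∀ i, 1 < Nat.card (P i) := fun i => (hP i) ▸ (hprime i).one_lt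
  have hvert : ∀ i j : Fin 4, i ≠ j → P i ≠ ⊥ ∧ P i ≠ ⊤ := by
    intro i j hij
    refine aux_ne_bot_top (hPlt i) (hdvd j) ?_
    rw [hP i]
    intro hd
    exact hpne j i (Ne.symm hij) ((Nat.prime_dvd_prime_iff_eq (hprime j) (hprime i)).mp hd)
  have hXvert : X ≠ ⊥ ∧ X ≠ ⊤ := aux_ne_bot_top hX1lt (hdvd 0) hnotdvd
  have hne1 : ∀ i : Fin 4, i ≠ i + 1 := by decide
  have hvert' : ∀ i, P i ≠ ⊥ ∧ P i ≠ ⊤ := fun i => hvert i (i + 1) (hne1 i)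
  let v : Fin 4 → {H : Subgroup G // H ≠ ⊥ ∧ H ≠ ⊤} := fun i => ⟨P i, hvert' i⟩
  let w : {H : Subgroup G // H ≠ ⊥ ∧ H ≠ ⊤} := ⟨X, hXvert⟩
  -- adjacencies
  have adj01 : (coprimeGraph G).Adj (v 0) (v 1) := aux_adj (hcop 0 1 (by decide))
  have adj02 : (coprimeGraph G).Adj (v 0) (v 2) := aux_adj (hcop 0 2 (by decide))
  have adj03 : (coprimeGraph G).Adj (v 0) (v 3) := aux_adj (hcop 0 3 (by decide))
  have adj12 : (coprimeGraph G).Adj (v 1) (v 2) := aux_adj (hcop 1 2 (by decide))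
  have adj13 : (coprimeGraph G).Adj (v 1) (v 3) := aux_adj (hcop 1 3 (by decide))
  have adj23 : (coprimeGraph G).Adj (v 2) (v 3) := aux_adj (hcop 2 3 (by decide))
  have adj0w : (coprimeGraph G).Adj (v 0) w := aux_adj (hXcop 0 (Or.inl rfl))
  have adj1w : (coprimeGraph G).Adj (v 1) w := aux_adj (hXcop 1 (Or.inr rfl))
  -- distinctness
  have hwv2 : v 2 ≠ w := fun hEq => hX2 (congrArg Subtype.val hEq).symm
  have hwv3 : v 3 ≠ w := fun hEq => hX3 (congrArg Subtype.val hEq).symm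
  exact aux_embed adj01 adj02 adj03 adj0w adj12 adj13 adj1w adj23 hwv2 hwv3
end

section
/- Let G be a finite group with |G| > 1. Then 𝒫(G) is K_{2,2}-free (contains no copy of the complete bipartite graph K_{2,2}, i.e. no 4-cycle) if and only if one of the following holds: (i) G is a p-group for some prime p; (ii) |G| = p^α · q for distinct primes p, q and some α ≥ 1, and the Sylow q-subgroup of G is normal (equivalently, G has a unique subgroup of order q); (iii) G is cyclic of order pqr for pairwise distinct primes p, q, r. -/
open SimpleGraph

set_option synthInstance.maxSize 1000 in
set_option maxHeartbeats 1000000 in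
private lemma boolcase : ∀ a b c d : Bool × Bool × Bool,
    (a.1 || a.2.1 || a.2.2) = true → (b.1 || b.2.1 || b.2.2) = true →
    (c.1 || c.2.1 || c.2.2) = true → (d.1 || d.2.1 || d.2.2) = true →
    (a == b) = false → (c == d) = false →
    (a.1 && c.1) = false → (a.2.1 && c.2.1) = false → (a.2.2 && c.2.2) = false →
    (a.1 && d.1) = false → (a.2.1 && d.2.1) = false → (a.2.2 && d.2.2) = false →
    (b.1 && c.1) = false → (b.2.1 && c.2.1) = false → (b.2.2 && c.2.2) = false →
    (b.1 && d.1) = false → (b.2.1 && d.2.1) = false → (b.2.2 && d.2.2) = false →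
    False := by decide

private lemma squarefree_pqr {p q r : ℕ} (hp : p.Prime) (hq : q.Prime) (hr : r.Prime)
    (hpq : p ≠ q) (hpr : p ≠ r) (hqr : q ≠ r) : Squarefree (p * q * r) := by
  rw [Nat.squarefree_mul_iff, Nat.squarefree_mul_iff]
  exact ⟨Nat.Coprime.mul ((Nat.coprime_primes hp hr).mpr hpr)
      ((Nat.coprime_primes hq hr).mpr hqr),
    ⟨(Nat.coprime_primes hp hq).mpr hpq, hp.squarefree, hq.squarefree⟩, hr.squarefree⟩

private lemma dvd_pqr_mem {p q r s : ℕ} (hp : p.Prime) (hq : q.Prime) (hr : r.Prime)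
    (hs : s.Prime) (h : s ∣ p * q * r) : s = p ∨ s = q ∨ s = r := by
  rcases (Nat.Prime.dvd_mul hs).mp h with h1 | h1
  · rcases (Nat.Prime.dvd_mul hs).mp h1 with h2 | h2
    · exact Or.inl ((Nat.prime_dvd_prime_iff_eq hs hp).mp h2)
    · exact Or.inr (Or.inl ((Nat.prime_dvd_prime_iff_eq hs hq).mp h2))
  · exact Or.inr (Or.inr ((Nat.prime_dvd_prime_iff_eq hs hr).mp h1))

private lemma eq_of_dvd_pqr {p q r : ℕ} (hp : p.Prime) (hq : q.Prime) (hr : r.Prime)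
    (hpq : p ≠ q) (hpr : p ≠ r) (hqr : q ≠ r) {d e : ℕ}
    (hd : d ∣ p * q * r) (he : e ∣ p * q * r)
    (h1 : p ∣ d ↔ p ∣ e) (h2 : q ∣ d ↔ q ∣ e) (h3 : r ∣ d ↔ r ∣ e) : d = e := by
  have hsf := squarefree_pqr hp hq hr hpq hpr hqr
  have hne : p * q * r ≠ 0 := (Nat.mul_pos (Nat.mul_pos hp.pos hq.pos) hr.pos).ne'
  have hd0 : d ≠ 0 := fun h => hne (by simpa [h] using hd)
  have he0 : e ≠ 0 := fun h => hne (by simpa [h] using he)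
  have hfac : d.primeFactors = e.primeFactors := by
    ext s
    simp only [Nat.mem_primeFactors]
    constructor
    · rintro ⟨hs, hsd, -⟩
      refine ⟨hs, ?_, he0⟩
      rcases dvd_pqr_mem hp hq hr hs (hsd.trans hd) with rfl | rfl | rfl
      · exact h1.mp hsd
      · exact h2.mp hsd
      · exact h3.mp hsd
    · rintro ⟨hs, hse, -⟩
      refine ⟨hs, ?_, hd0⟩
      rcases dvd_pqr_mem hp hq hr hs (hse.trans he) with rfl | rfl | rfl
      · exact h1.mpr hse
      · exact h2.mpr hse
      · exact h3.mpr hse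
  calc d = ∏ s ∈ d.primeFactors, s := (Nat.prod_primeFactors_of_squarefree
            (hsf.squarefree_of_dvd hd)).symm
    _ = ∏ s ∈ e.primeFactors, s := by rw [hfac]
    _ = e := Nat.prod_primeFactors_of_squarefree (hsf.squarefree_of_dvd he)

private lemma not_dvd_both {s x y : ℕ} (hs : s.Prime) (hco : Nat.Coprime x y)
    (hx : s ∣ x) (hy : s ∣ y) : False :=
  hs.ne_one (Nat.eq_one_of_dvd_one (hco ▸ Nat.dvd_gcd hx hy))

private lemma prime_not_dvd_prime_pow {p q : ℕ} (hp : p.Prime) (hq : q.Prime)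
    (hne : q ≠ p) (i : ℕ) : ¬ q ∣ p ^ i := fun h =>
  hne ((Nat.prime_dvd_prime_iff_eq hq hp).mp (hq.dvd_of_dvd_pow h))

section helpers
variable {G : Type*} [Group G] [Finite G]

set_option linter.unusedSectionVars false

private lemma subgroups_of_K22
    (h : ∃ f : completeBipartiteGraph (Fin 2) (Fin 2) →g coprimeGraph G, Function.Injective f) :
    ∃ A B C D : {H : Subgroup G // H ≠ ⊥ ∧ H ≠ ⊤}, A ≠ B ∧ C ≠ D ∧
      (coprimeGraph G).Adj A C ∧ (coprimeGraph G).Adj A D ∧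
      (coprimeGraph G).Adj B C ∧ (coprimeGraph G).Adj B D := by
  obtain ⟨f, hf⟩ := h
  refine ⟨f (.inl 0), f (.inl 1), f (.inr 0), f (.inr 1),
    fun h => by simpa using hf h, fun h => by simpa using hf h, ?_, ?_, ?_, ?_⟩ <;>
    exact f.map_rel (by simp)

private lemma K22_of_subgroups {A B C D : {H : Subgroup G // H ≠ ⊥ ∧ H ≠ ⊤}}
    (hAB : A ≠ B) (hCD : C ≠ D)
    (hAC : (coprimeGraph G).Adj A C) (hAD : (coprimeGraph G).Adj A D)
    (hBC : (coprimeGraph G).Adj B C) (hBD : (coprimeGraph G).Adj B D) :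
    ∃ f : completeBipartiteGraph (Fin 2) (Fin 2) →g coprimeGraph G, Function.Injective f := by
  set F : (Fin 2 ⊕ Fin 2) → {H : Subgroup G // H ≠ ⊥ ∧ H ≠ ⊤} :=
    Sum.elim (fun i => if i = 0 then A else B) (fun i => if i = 0 then C else D) with hF
  have hinj : Function.Injective F := by
    have h1 : A ≠ C := hAC.1
    have h2 : A ≠ D := hAD.1
    have h3 : B ≠ C := hBC.1
    have h4 : B ≠ D := hBD.1
    rintro (a | a) (b | b) hab <;> fin_cases a <;> fin_cases b <;>
      simp only [hF, Sum.elim_inl, Sum.elim_inr] at hab <;>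
      norm_num at hab <;>
      first
        | rfl
        | (exact absurd hab (by assumption))
        | (exact absurd hab.symm (by assumption))
        | (exact absurd hab hAB) | (exact absurd hab.symm hAB)
        | (exact absurd hab hCD) | (exact absurd hab.symm hCD)
  refine ⟨⟨F, ?_⟩, hinj⟩
  rintro (a | a) (b | b) h
  · simp at h
  · fin_cases a <;> fin_cases b <;>
      simp only [hF, Sum.elim_inl, Sum.elim_inr] <;> norm_num <;>
      first | exact hAC | exact hAD | exact hBC | exact hBD
  · fin_cases a <;> fin_cases b <;>
      simp only [hF, Sum.elim_inl, Sum.elim_inr] <;> norm_num <;>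
      first | exact hAC.symm | exact hAD.symm | exact hBC.symm | exact hBD.symm
  · simp at h

private lemma vertex_cond {H : Subgroup G} (h1 : Nat.card H ≠ 1)
    (h2 : Nat.card H ≠ Nat.card G) : H ≠ ⊥ ∧ H ≠ ⊤ := by
  constructor
  · rintro rfl; exact h1 Subgroup.card_bot
  · rintro rfl; exact h2 Subgroup.card_top

private lemma exists_subgroup_of_prime_pow {p k : ℕ} (hp : p.Prime) (h : p ^ k ∣ Nat.card G) :
    ∃ H : Subgroup G, Nat.card H = p ^ k := by
  haveI := Fact.mk hp
  exact Sylow.exists_subgroup_card_pow_prime p h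

private lemma exists_subgroup_prime {p : ℕ} (hp : p.Prime) (h : p ∣ Nat.card G) :
    ∃ H : Subgroup G, Nat.card H = p := by
  simpa using exists_subgroup_of_prime_pow (k := 1) hp (by simpa using h)

private lemma normal_of_unique_card {d : ℕ} (hu : ∃! H : Subgroup G, Nat.card H = d)
    {H : Subgroup G} (hH : Nat.card H = d) : H.Normal := by
  obtain ⟨H0, hH0, huniq⟩ := hu
  constructor
  intro x hx g
  have hcard : Nat.card (H.map (MulAut.conj g).toMonoidHom) = d := by
    rw [← hH]
    exact (Nat.card_congr
      (H.equivMapOfInjective (MulAut.conj g).toMonoidHom (MulAut.conj g).injective).toEquiv).symm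
  have : H.map (MulAut.conj g).toMonoidHom = H := (huniq _ hcard).trans (huniq H hH).symm
  rw [← this]
  exact ⟨x, hx, rfl⟩

private lemma cyclic_subgroup_eq_of_card_eq [IsCyclic G] {H K : Subgroup G}
    (h : Nat.card H = Nat.card K) : H = K := by
  classical
  haveI := Fintype.ofFinite G
  have main : ∀ H : Subgroup G, (H : Set G) = {x : G | x ^ Nat.card H = 1} := by
    intro H
    have hd : 0 < Nat.card H := Nat.card_pos
    have hsub : (H : Set G) ⊆ {x : G | x ^ Nat.card H = 1} := by
      intro x hx
      have hpow : (⟨x, hx⟩ : H) ^ Nat.card H = 1 := pow_card_eq_one'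
      have : ((⟨x, hx⟩ : H) : G) ^ Nat.card H = 1 := by
        rw [← SubmonoidClass.coe_pow, hpow, OneMemClass.coe_one]
      exact this
    have hle : {x : G | x ^ Nat.card H = 1}.ncard ≤ Nat.card H := by
      rw [Set.ncard_eq_toFinset_card', Set.toFinset_setOf]
      convert IsCyclic.card_pow_eq_one_le (α := G) hd using 2
    have hcard : (H : Set G).ncard = Nat.card H := by
      rw [← Nat.card_coe_set_eq]; rfl
    exact Set.eq_of_subset_of_ncard_le hsub (by rw [hcard]; exact hle) (Set.toFinite _)
  apply SetLike.coe_injective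
  rw [main H, main K, h]

private lemma disjoint_of_coprime_card {H K : Subgroup G}
    (h : Nat.Coprime (Nat.card H) (Nat.card K)) : Disjoint H K := by
  rw [disjoint_iff]
  apply Subgroup.card_eq_one.mp
  exact Nat.eq_one_of_dvd_one
    (h ▸ Nat.dvd_gcd (Subgroup.card_dvd_of_le inf_le_left) (Subgroup.card_dvd_of_le inf_le_right))

private lemma no4sub
    (hfree : ¬ ∃ f : completeBipartiteGraph (Fin 2) (Fin 2) →g coprimeGraph G,
      Function.Injective f)
    {H1 H2 K1 K2 : Subgroup G}
    (e1 : H1 ≠ ⊥ ∧ H1 ≠ ⊤) (e2 : H2 ≠ ⊥ ∧ H2 ≠ ⊤)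
    (e3 : K1 ≠ ⊥ ∧ K1 ≠ ⊤) (e4 : K2 ≠ ⊥ ∧ K2 ≠ ⊤)
    (hH : H1 ≠ H2) (hK : K1 ≠ K2)
    (c1 : Nat.Coprime (Nat.card H1) (Nat.card K1))
    (c2 : Nat.Coprime (Nat.card H1) (Nat.card K2))
    (c3 : Nat.Coprime (Nat.card H2) (Nat.card K1))
    (c4 : Nat.Coprime (Nat.card H2) (Nat.card K2)) : False := by
  apply hfree
  have adj : ∀ (X Y : Subgroup G) (eX : X ≠ ⊥ ∧ X ≠ ⊤) (eY : Y ≠ ⊥ ∧ Y ≠ ⊤),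
      Nat.Coprime (Nat.card X) (Nat.card Y) →
      (coprimeGraph G).Adj ⟨X, eX⟩ ⟨Y, eY⟩ := by
    intro X Y eX eY hco
    refine ⟨fun h => ?_, hco⟩
    have hXY : X = Y := congrArg Subtype.val h
    subst hXY
    have := Nat.dvd_gcd (dvd_refl (Nat.card X)) (dvd_refl (Nat.card X))
    rw [hco] at this
    exact eX.1 (Subgroup.card_eq_one.mp (Nat.eq_one_of_dvd_one this))
  exact K22_of_subgroups (A := ⟨H1, e1⟩) (B := ⟨H2, e2⟩) (C := ⟨K1, e3⟩) (D := ⟨K2, e4⟩)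
    (fun h => hH (congrArg Subtype.val h)) (fun h => hK (congrArg Subtype.val h))
    (adj _ _ _ _ c1) (adj _ _ _ _ c2) (adj _ _ _ _ c3) (adj _ _ _ _ c4)

private lemma no4
    (hfree : ¬ ∃ f : completeBipartiteGraph (Fin 2) (Fin 2) →g coprimeGraph G,
      Function.Injective f)
    {a b c d : ℕ}
    (ea : ∃ H : Subgroup G, Nat.card H = a) (eb : ∃ H : Subgroup G, Nat.card H = b)
    (ec : ∃ H : Subgroup G, Nat.card H = c) (ed : ∃ H : Subgroup G, Nat.card H = d)
    (ha1 : a ≠ 1) (han : a ≠ Nat.card G)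
    (hb1 : b ≠ 1) (hbn : b ≠ Nat.card G)
    (hc1 : c ≠ 1) (hcn : c ≠ Nat.card G)
    (hd1 : d ≠ 1) (hdn : d ≠ Nat.card G)
    (hab : a ≠ b) (hcd : c ≠ d)
    (hac : a.Coprime c) (had : a.Coprime d)
    (hbc : b.Coprime c) (hbd : b.Coprime d) : False := by
  obtain ⟨H1, rfl⟩ := ea
  obtain ⟨H2, rfl⟩ := eb
  obtain ⟨K1, rfl⟩ := ec
  obtain ⟨K2, rfl⟩ := ed
  exact no4sub hfree (vertex_cond ha1 han) (vertex_cond hb1 hbn)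
    (vertex_cond hc1 hcn) (vertex_cond hd1 hdn)
    (fun h => hab (by rw [h])) (fun h => hcd (by rw [h])) hac had hbc hbd

private lemma unique_prime_subgroup_of_free
    (hfree : ¬ ∃ f : completeBipartiteGraph (Fin 2) (Fin 2) →g coprimeGraph G,
      Function.Injective f)
    {u v w : ℕ} (hu : u.Prime) (hv : v.Prime) (hw : w.Prime)
    (huv : u ≠ v) (huw : u ≠ w) (hvw : v ≠ w)
    (hud : u ∣ Nat.card G) (hvd : v ∣ Nat.card G) (hwd : w ∣ Nat.card G) :
    ∃! H : Subgroup G, Nat.card H = u := by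
  obtain ⟨U, hU⟩ := exists_subgroup_prime hu hud
  refine ⟨U, hU, fun U' hU' => ?_⟩
  by_contra hne
  obtain ⟨V, hV⟩ := exists_subgroup_prime hv hvd
  obtain ⟨W, hW⟩ := exists_subgroup_prime hw hwd
  have hune : u ≠ Nat.card G := fun h => prime_not_dvd_prime_pow hu hv huv.symm 1
    (by rw [pow_one]; exact h ▸ hvd)
  have hvne : v ≠ Nat.card G := fun h => prime_not_dvd_prime_pow hv hu huv 1
    (by rw [pow_one]; exact h ▸ hud)
  have hwne : w ≠ Nat.card G := fun h => prime_not_dvd_prime_pow hw hu huw 1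
    (by rw [pow_one]; exact h ▸ hud)
  exact no4sub hfree (vertex_cond (by rw [hU']; exact hu.ne_one) (by rw [hU']; exact hune))
    (vertex_cond (by rw [hU]; exact hu.ne_one) (by rw [hU]; exact hune))
    (vertex_cond (by rw [hV]; exact hv.ne_one) (by rw [hV]; exact hvne))
    (vertex_cond (by rw [hW]; exact hw.ne_one) (by rw [hW]; exact hwne))
    hne (fun h => hvw (by rw [← hV, ← hW, h]))
    (by rw [hU', hV]; exact (Nat.coprime_primes hu hv).mpr huv)
    (by rw [hU', hW]; exact (Nat.coprime_primes hu hw).mpr huw)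
    (by rw [hU, hV]; exact (Nat.coprime_primes hu hv).mpr huv)
    (by rw [hU, hW]; exact (Nat.coprime_primes hu hw).mpr huw)

end helpers

private lemma case2core {G : Type*} [Group G] [Finite G]
    (hfree : ¬ ∃ f : completeBipartiteGraph (Fin 2) (Fin 2) →g coprimeGraph G,
      Function.Injective f)
    {p q a : ℕ} (hp : p.Prime) (hq : q.Prime) (hpq : p ≠ q)
    (ha : 1 ≤ a) (hcard : Nat.card G = p ^ a * q) :
    ∃ p' q' α : ℕ, p'.Prime ∧ q'.Prime ∧ p' ≠ q' ∧ 1 ≤ α ∧ Nat.card G = p' ^ α * q' ∧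
      ∃! H : Subgroup G, Nat.card H = q' := by
  have hqd : q ∣ Nat.card G := ⟨p ^ a, by rw [hcard]; ring⟩
  have hpd : p ∣ Nat.card G := by
    rw [hcard]
    exact Dvd.dvd.mul_right (dvd_pow_self p (Nat.one_le_iff_ne_zero.mp ha)) q
  have hqne : q ≠ Nat.card G := fun h =>
    prime_not_dvd_prime_pow hq hp hpq 1 (by rw [pow_one]; exact h ▸ hpd)
  have hpowne : ∀ i, p ^ i ≠ Nat.card G := fun i h =>
    prime_not_dvd_prime_pow hp hq hpq.symm i (h ▸ hqd)
  by_cases hu : ∃! H : Subgroup G, Nat.card H = q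
  · exact ⟨p, q, a, hp, hq, hpq, ha, hcard, hu⟩
  obtain ⟨Q1, hQ1⟩ := exists_subgroup_prime hq hqd
  have hQ2ex : ∃ Q2 : Subgroup G, Nat.card Q2 = q ∧ Q2 ≠ Q1 := by
    by_contra hcon
    push_neg at hcon
    exact hu ⟨Q1, hQ1, fun y hy => hcon y hy⟩
  obtain ⟨Q2, hQ2, hQQ⟩ := hQ2ex
  have vq1 := vertex_cond (H := Q1) (by rw [hQ1]; exact hq.ne_one) (by rw [hQ1]; exact hqne)
  have vq2 := vertex_cond (H := Q2) (by rw [hQ2]; exact hq.ne_one) (by rw [hQ2]; exact hqne)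
  have hcopq : ∀ (X : Subgroup G) (i : ℕ), Nat.card X = q →
      Nat.Coprime (Nat.card X) (p ^ i) := by
    intro X i hX
    rw [hX]
    exact Nat.Coprime.pow_right i ((Nat.coprime_primes hq hp).mpr hpq.symm)
  have ha1 : a = 1 := by
    by_contra hne1
    have h2a : p ^ 2 ∣ Nat.card G := by
      rw [hcard]
      exact Dvd.dvd.mul_right (pow_dvd_pow p (by omega)) q
    obtain ⟨P1, hP1⟩ := exists_subgroup_prime hp hpd
    obtain ⟨P2, hP2⟩ := exists_subgroup_of_prime_pow (k := 2) hp h2a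
    have hPne : P1 ≠ P2 := by
      intro h
      have heq : p = p ^ 2 :=
        hP1.symm.trans (((by rw [h] : Nat.card P1 = Nat.card P2)).trans hP2)
      have hlt : p < p ^ 2 := by
        calc p = p ^ 1 := (pow_one p).symm
          _ < p ^ 2 := pow_lt_pow_right₀ hp.one_lt one_lt_two
      exact hlt.ne heq
    exact no4sub hfree vq1 vq2
      (vertex_cond (by rw [hP1]; exact hp.ne_one)
        (by rw [hP1]; exact (by simpa using hpowne 1)))
      (vertex_cond (by rw [hP2]; exact (Nat.one_lt_pow two_ne_zero hp.one_lt).ne')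
        (by rw [hP2]; exact hpowne 2))
      (Ne.symm hQQ) hPne
      (by rw [hP1, ← pow_one p]; exact hcopq Q1 1 hQ1)
      (by rw [hP2]; exact hcopq Q1 2 hQ1)
      (by rw [hP1, ← pow_one p]; exact hcopq Q2 1 hQ2)
      (by rw [hP2]; exact hcopq Q2 2 hQ2)
  have hup : ∃! H : Subgroup G, Nat.card H = p := by
    obtain ⟨P1, hP1⟩ := exists_subgroup_prime hp hpd
    refine ⟨P1, hP1, fun P2 hP2 => ?_⟩
    by_contra hne
    have hpne : p ≠ Nat.card G := by simpa using hpowne 1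
    exact no4sub hfree
      (vertex_cond (by rw [hP2]; exact hp.ne_one) (by rw [hP2]; exact hpne))
      (vertex_cond (by rw [hP1]; exact hp.ne_one) (by rw [hP1]; exact hpne))
      vq1 vq2 hne (Ne.symm hQQ)
      (by rw [hP2, hQ1]; exact (Nat.coprime_primes hp hq).mpr hpq)
      (by rw [hP2, hQ2]; exact (Nat.coprime_primes hp hq).mpr hpq)
      (by rw [hP1, hQ1]; exact (Nat.coprime_primes hp hq).mpr hpq)
      (by rw [hP1, hQ2]; exact (Nat.coprime_primes hp hq).mpr hpq)
  exact ⟨q, p, 1, hq, hp, hpq.symm, le_refl 1,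
    by rw [hcard, ha1, pow_one, pow_one, mul_comm], hup⟩

theorem coprimeGraph_K22_free_iff {G : Type*} [Group G] [Finite G]
    (hG : 1 < Nat.card G) :
    (¬ ∃ f : completeBipartiteGraph (Fin 2) (Fin 2) →g coprimeGraph G,
        Function.Injective f) ↔
      ((∃ p : ℕ, p.Prime ∧ IsPGroup p G) ∨
       (∃ p q α : ℕ, p.Prime ∧ q.Prime ∧ p ≠ q ∧ 1 ≤ α ∧ Nat.card G = p ^ α * q ∧
          ∃! H : Subgroup G, Nat.card H = q) ∨
       (∃ p q r : ℕ, p.Prime ∧ q.Prime ∧ r.Prime ∧ p ≠ q ∧ p ≠ r ∧ q ≠ r ∧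
          IsCyclic G ∧ Nat.card G = p * q * r)) := by
  have hn0 : Nat.card G ≠ 0 := Nat.card_pos.ne'
  constructor
  · intro hfree
    have hprime : ∀ u ∈ (Nat.card G).primeFactors, u.Prime :=
      fun u hu => Nat.prime_of_mem_primeFactors hu
    have hdvd : ∀ u ∈ (Nat.card G).primeFactors, u ∣ Nat.card G :=
      fun u hu => Nat.dvd_of_mem_primeFactors hu
    have h1le : 1 ≤ (Nat.card G).primeFactors.card :=
      Finset.card_pos.mpr (Nat.nonempty_primeFactors.mpr hG)
    obtain ⟨k, hk⟩ : ∃ k, (Nat.card G).primeFactors.card = k := ⟨_, rfl⟩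
    rcases k with _ | _ | _ | _ | k
    · omega
    · -- one prime: p-group
      obtain ⟨p, hs⟩ := Finset.card_eq_one.mp hk
      have hpmem : p ∈ (Nat.card G).primeFactors := hs ▸ Finset.mem_singleton_self p
      have hp : p.Prime := hprime p hpmem
      left
      refine ⟨p, hp, ?_⟩
      haveI := Fact.mk hp
      rw [IsPGroup.iff_card]
      refine ⟨(Nat.card G).primeFactorsList.length,
        Nat.eq_prime_pow_of_unique_prime_dvd hn0 ?_⟩
      intro d hd hdn
      have : d ∈ (Nat.card G).primeFactors := Nat.mem_primeFactors.mpr ⟨hd, hdn, hn0⟩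
      rw [hs] at this
      exact Finset.mem_singleton.mp this
    · -- two primes
      obtain ⟨p, q, hpq, hs⟩ := Finset.card_eq_two.mp hk
      have hpmem : p ∈ (Nat.card G).primeFactors := hs ▸ (by simp)
      have hqmem : q ∈ (Nat.card G).primeFactors := hs ▸ (by simp)
      have hp := hprime p hpmem
      have hq := hprime q hqmem
      have hpd := hdvd p hpmem
      have hqd := hdvd q hqmem
      set a := (Nat.card G).factorization p with haa
      set b := (Nat.card G).factorization q with hbb
      have ha : 1 ≤ a := Nat.Prime.factorization_pos_of_dvd hp hn0 hpd
      have hb : 1 ≤ b := Nat.Prime.factorization_pos_of_dvd hq hn0 hqd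
      have hprod : Nat.card G = p ^ a * q ^ b := by
        conv_lhs => rw [← Nat.factorization_prod_pow_eq_self hn0]
        rw [Finsupp.prod, Nat.support_factorization, hs, Finset.prod_pair hpq]
      have hno22 : ¬(2 ≤ a ∧ 2 ≤ b) := by
        rintro ⟨h2a, h2b⟩
        have hp2 : p ^ 2 ∣ Nat.card G := (Nat.Prime.pow_dvd_iff_le_factorization hp hn0).mpr h2a
        have hq2 : q ^ 2 ∣ Nat.card G := (Nat.Prime.pow_dvd_iff_le_factorization hq hn0).mpr h2b
        have hpne : ∀ i, p ^ i ≠ Nat.card G := fun i h =>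
          prime_not_dvd_prime_pow hp hq hpq.symm i (h ▸ hqd)
        have hqne : ∀ i, q ^ i ≠ Nat.card G := fun i h =>
          prime_not_dvd_prime_pow hq hp hpq i (h ▸ hpd)
        have hcop : ∀ i j, Nat.Coprime (p ^ i) (q ^ j) := fun i j =>
          Nat.Coprime.pow i j ((Nat.coprime_primes hp hq).mpr hpq)
        refine no4 hfree (exists_subgroup_prime hp hpd)
          (exists_subgroup_of_prime_pow (k := 2) hp hp2)
          (exists_subgroup_prime hq hqd)
          (exists_subgroup_of_prime_pow (k := 2) hq hq2)
          hp.ne_one (by simpa using hpne 1)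
          (Nat.one_lt_pow two_ne_zero hp.one_lt).ne' (hpne 2)
          hq.ne_one (by simpa using hqne 1)
          (Nat.one_lt_pow two_ne_zero hq.one_lt).ne' (hqne 2)
          ?_ ?_ ?_ ?_ ?_ ?_
        · intro h
          have hlt : p < p ^ 2 := by
            calc p = p ^ 1 := (p.pow_one).symm
              _ < p ^ 2 := pow_lt_pow_right₀ hp.one_lt one_lt_two
          exact hlt.ne h
        · intro h
          have hlt : q < q ^ 2 := by
            calc q = q ^ 1 := (q.pow_one).symm
              _ < q ^ 2 := pow_lt_pow_right₀ hq.one_lt one_lt_two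
          exact hlt.ne h
        · simpa using hcop 1 1
        · simpa using hcop 1 2
        · simpa using hcop 2 1
        · exact hcop 2 2
      right; left
      rcases (by omega : b = 1 ∨ a = 1) with hb1 | ha1
      · exact case2core hfree hp hq hpq ha (by rw [hprod, hb1, pow_one])
      · exact case2core hfree hq hp hpq.symm hb
          (by rw [hprod, ha1, pow_one, mul_comm])
    · -- three primes
      obtain ⟨p, q, r, hpq, hpr, hqr, hs⟩ := Finset.card_eq_three.mp hk
      have hpmem : p ∈ (Nat.card G).primeFactors := hs ▸ (by simp)
      have hqmem : q ∈ (Nat.card G).primeFactors := hs ▸ (by simp)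
      have hrmem : r ∈ (Nat.card G).primeFactors := hs ▸ (by simp)
      have hp := hprime p hpmem
      have hq := hprime q hqmem
      have hr := hprime r hrmem
      have hpd := hdvd p hpmem
      have hqd := hdvd q hqmem
      have hrd := hdvd r hrmem
      -- no square of any of the primes divides n
      have hnosq : ∀ u v w : ℕ, u.Prime → v.Prime → w.Prime → u ≠ v → u ≠ w → v ≠ w →
          v ∣ Nat.card G → w ∣ Nat.card G → ¬ u ^ 2 ∣ Nat.card G := by
        intro u v w hu hv hw huv huw hvw hvd hwd h2
        have hud : u ∣ Nat.card G := (dvd_pow_self u two_ne_zero).trans h2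
        have hune : ∀ i, u ^ i ≠ Nat.card G := fun i h =>
          prime_not_dvd_prime_pow hu hv huv.symm i (h ▸ hvd)
        have hvne : v ≠ Nat.card G := fun h =>
          prime_not_dvd_prime_pow hv hu huv 1 (by rw [pow_one]; exact h ▸ hud)
        have hwne : w ≠ Nat.card G := fun h =>
          prime_not_dvd_prime_pow hw hu huw 1 (by rw [pow_one]; exact h ▸ hud)
        refine no4 hfree (exists_subgroup_prime hu hud)
          (exists_subgroup_of_prime_pow (k := 2) hu h2)
          (exists_subgroup_prime hv hvd) (exists_subgroup_prime hw hwd)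
          hu.ne_one (by simpa using hune 1)
          (Nat.one_lt_pow two_ne_zero hu.one_lt).ne' (hune 2)
          hv.ne_one hvne hw.ne_one hwne
          ?_ (fun h => hvw h)
          ((Nat.coprime_primes hu hv).mpr huv)
          ((Nat.coprime_primes hu hw).mpr huw)
          (Nat.Coprime.pow_left 2 ((Nat.coprime_primes hu hv).mpr huv))
          (Nat.Coprime.pow_left 2 ((Nat.coprime_primes hu hw).mpr huw))
        intro h
        have hlt : u < u ^ 2 := by
          calc u = u ^ 1 := (u.pow_one).symm
            _ < u ^ 2 := pow_lt_pow_right₀ hu.one_lt one_lt_two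
        exact hlt.ne h
      have hexp : ∀ u ∈ (Nat.card G).primeFactors, (Nat.card G).factorization u = 1 := by
        intro u hu
        have h1 : 1 ≤ (Nat.card G).factorization u :=
          Nat.Prime.factorization_pos_of_dvd (hprime u hu) hn0 (hdvd u hu)
        have h2 : ¬ u ^ 2 ∣ Nat.card G := by
          have humem := hu
          rw [hs] at humem
          simp only [Finset.mem_insert, Finset.mem_singleton] at humem
          rcases humem with rfl | rfl | rfl
          · exact hnosq u q r (hprime u hu) hq hr hpq hpr hqr hqd hrd
          · exact hnosq u p r (hprime u hu) hp hr hpq.symm hqr hpr hpd hrd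
          · exact hnosq u p q (hprime u hu) hp hq hpr.symm hqr.symm hpq hpd hqd
        have := (Nat.Prime.pow_dvd_iff_le_factorization (hprime u hu) hn0).not.mp h2
        omega
      have hcard : Nat.card G = p * q * r := by
        conv_lhs => rw [← Nat.factorization_prod_pow_eq_self hn0]
        rw [Finsupp.prod, Nat.support_factorization, hs]
        rw [Finset.prod_insert (by simp [hpq, hpr]),
          Finset.prod_insert (by simp [hqr]), Finset.prod_singleton]
        rw [hexp p hpmem, hexp q hqmem, hexp r hrmem]
        ring
      -- unique subgroups of prime order
      have hup := unique_prime_subgroup_of_free hfree hp hq hr hpq hpr hqr hpd hqd hrd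
      have huq := unique_prime_subgroup_of_free hfree hq hp hr hpq.symm hqr hpr hqd hpd hrd
      have hur := unique_prime_subgroup_of_free hfree hr hp hq hpr.symm hqr.symm hpq hrd hpd hqd
      -- elements of prime order
      haveI := Fintype.ofFinite G
      haveI := Fact.mk hp
      haveI := Fact.mk hq
      haveI := Fact.mk hr
      obtain ⟨x, hx⟩ := exists_prime_orderOf_dvd_card (G := G) p
        (by rw [← Nat.card_eq_fintype_card]; exact hpd)
      obtain ⟨y, hy⟩ := exists_prime_orderOf_dvd_card (G := G) q
        (by rw [← Nat.card_eq_fintype_card]; exact hqd)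
      obtain ⟨z, hz⟩ := exists_prime_orderOf_dvd_card (G := G) r
        (by rw [← Nat.card_eq_fintype_card]; exact hrd)
      have hxc : Nat.card (Subgroup.zpowers x) = p := by rw [Nat.card_zpowers, hx]
      have hyc : Nat.card (Subgroup.zpowers y) = q := by rw [Nat.card_zpowers, hy]
      have hzc : Nat.card (Subgroup.zpowers z) = r := by rw [Nat.card_zpowers, hz]
      have hnx : (Subgroup.zpowers x).Normal := normal_of_unique_card hup hxc
      have hny : (Subgroup.zpowers y).Normal := normal_of_unique_card huq hyc
      have hnz : (Subgroup.zpowers z).Normal := normal_of_unique_card hur hzc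
      have hcomm : ∀ (a b : G) (Ha Hb : Subgroup G), Ha.Normal → Hb.Normal →
          a ∈ Ha → b ∈ Hb → Nat.Coprime (Nat.card Ha) (Nat.card Hb) → Commute a b := by
        intro a b Ha Hb hna hnb haa hbb hco
        exact Subgroup.commute_of_normal_of_disjoint Ha Hb hna hnb
          (disjoint_of_coprime_card hco) a b haa hbb
      have cxy : Commute x y := hcomm x y _ _ hnx hny (Subgroup.mem_zpowers x)
        (Subgroup.mem_zpowers y)
        (by rw [hxc, hyc]; exact (Nat.coprime_primes hp hq).mpr hpq)
      have cxz : Commute x z := hcomm x z _ _ hnx hnz (Subgroup.mem_zpowers x)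
        (Subgroup.mem_zpowers z)
        (by rw [hxc, hzc]; exact (Nat.coprime_primes hp hr).mpr hpr)
      have cyz : Commute y z := hcomm y z _ _ hny hnz (Subgroup.mem_zpowers y)
        (Subgroup.mem_zpowers z)
        (by rw [hyc, hzc]; exact (Nat.coprime_primes hq hr).mpr hqr)
      have hyz : orderOf (y * z) = q * r := by
        rw [Commute.orderOf_mul_eq_mul_orderOf_of_coprime cyz
          (by rw [hy, hz]; exact (Nat.coprime_primes hq hr).mpr hqr), hy, hz]
      have hxyz : orderOf (x * (y * z)) = p * (q * r) := by
        rw [Commute.orderOf_mul_eq_mul_orderOf_of_coprime (cxy.mul_right cxz)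
          (by rw [hx, hyz]
              exact Nat.Coprime.mul_right ((Nat.coprime_primes hp hq).mpr hpq)
                ((Nat.coprime_primes hp hr).mpr hpr)), hx, hyz]
      have hcyc : IsCyclic G := isCyclic_of_orderOf_eq_card (x * (y * z))
        (by rw [hxyz, hcard, mul_assoc])
      exact Or.inr (Or.inr ⟨p, q, r, hp, hq, hr, hpq, hpr, hqr, hcyc, hcard⟩)
    · -- at least four primes: contradiction
      exfalso
      obtain ⟨t, hts, ht4⟩ := Finset.exists_subset_card_eq
        (show 4 ≤ (Nat.card G).primeFactors.card by omega)
      obtain ⟨a, hat⟩ := Finset.card_pos.mp (by rw [ht4]; norm_num)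
      have h3 : (t.erase a).card = 3 := by rw [Finset.card_erase_of_mem hat, ht4]
      obtain ⟨b, c, d, hbc, hbd, hcd, habc⟩ := Finset.card_eq_three.mp h3
      have hb : b ∈ t.erase a := habc ▸ (by simp)
      have hc : c ∈ t.erase a := habc ▸ (by simp)
      have hd : d ∈ t.erase a := habc ▸ (by simp)
      have hba : b ≠ a := Finset.ne_of_mem_erase hb
      have hca : c ≠ a := Finset.ne_of_mem_erase hc
      have hda : d ≠ a := Finset.ne_of_mem_erase hd
      have ma : a ∈ (Nat.card G).primeFactors := hts hat
      have mb : b ∈ (Nat.card G).primeFactors := hts (Finset.mem_of_mem_erase hb)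
      have mc : c ∈ (Nat.card G).primeFactors := hts (Finset.mem_of_mem_erase hc)
      have md : d ∈ (Nat.card G).primeFactors := hts (Finset.mem_of_mem_erase hd)
      have hpa := hprime a ma
      have hpb := hprime b mb
      have hpc := hprime c mc
      have hpd' := hprime d md
      have hnn : ∀ u v : ℕ, u.Prime → v.Prime → u ≠ v → v ∣ Nat.card G →
          u ≠ Nat.card G := fun u v hu hv huv hvd h =>
        prime_not_dvd_prime_pow hu hv huv.symm 1 (by rw [pow_one]; exact h ▸ hvd)
      exact no4 hfree (exists_subgroup_prime hpa (hdvd a ma))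
        (exists_subgroup_prime hpb (hdvd b mb))
        (exists_subgroup_prime hpc (hdvd c mc))
        (exists_subgroup_prime hpd' (hdvd d md))
        hpa.ne_one (hnn a b hpa hpb hba.symm (hdvd b mb))
        hpb.ne_one (hnn b a hpb hpa hba (hdvd a ma))
        hpc.ne_one (hnn c a hpc hpa hca (hdvd a ma))
        hpd'.ne_one (hnn d a hpd' hpa hda (hdvd a ma))
        (fun h => hba h.symm)
        (fun h => hcd h)
        ((Nat.coprime_primes hpa hpc).mpr (fun h => hca (h ▸ rfl)))
        ((Nat.coprime_primes hpa hpd').mpr (fun h => hda (h ▸ rfl)))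
        ((Nat.coprime_primes hpb hpc).mpr hbc)
        ((Nat.coprime_primes hpb hpd').mpr hbd)
  · intro hyp hex
    obtain ⟨A, B, C, D, hAB, hCD, hAC, hAD, hBC, hBD⟩ := subgroups_of_K22 hex
    have hcd : ∀ X : {H : Subgroup G // H ≠ ⊥ ∧ H ≠ ⊤}, Nat.card X.1 ∣ Nat.card G :=
      fun X => Subgroup.card_subgroup_dvd_card X.1
    have hc1 : ∀ X : {H : Subgroup G // H ≠ ⊥ ∧ H ≠ ⊤}, Nat.card X.1 ≠ 1 :=
      fun X h => X.2.1 (Subgroup.card_eq_one.mp h)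
    rcases hyp with ⟨p, hp, hpg⟩ |
      ⟨p, q, α, hp, hq, hpq, hα, hcard, hun⟩ |
      ⟨p, q, r, hp, hq, hr, hpq, hpr, hqr, hcyc, hcard⟩
    · -- p-group case
      haveI := Fact.mk hp
      obtain ⟨m, hm⟩ := IsPGroup.iff_card.mp hpg
      obtain ⟨i, hi, hAi⟩ := (Nat.dvd_prime_pow hp).mp (hm ▸ hcd A)
      obtain ⟨j, hj, hCj⟩ := (Nat.dvd_prime_pow hp).mp (hm ▸ hcd C)
      have hi0 : i ≠ 0 := by
        intro h
        exact hc1 A (by rw [hAi, h, pow_zero])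
      have hj0 : j ≠ 0 := by
        intro h
        exact hc1 C (by rw [hCj, h, pow_zero])
      exact not_dvd_both hp hAC.2 (hAi ▸ dvd_pow_self p hi0) (hCj ▸ dvd_pow_self p hj0)
    · -- p^α * q case
      obtain ⟨Q0, hQ0, huniq⟩ := hun
      have claim : ∀ X Y : {H : Subgroup G // H ≠ ⊥ ∧ H ≠ ⊤},
          (coprimeGraph G).Adj X Y → X.1 = Q0 ∨ Y.1 = Q0 := by
        intro X Y hXY
        obtain ⟨hne, hco⟩ := hXY
        have hdX := hcd X
        have hdY := hcd Y
        rw [hcard] at hdX hdY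
        by_cases hpdX : p ∣ Nat.card X.1
        · right
          have hnd : ¬ p ∣ Nat.card Y.1 := fun h => not_dvd_both hp hco hpdX h
          have hcop : Nat.Coprime (Nat.card Y.1) (p ^ α) :=
            Nat.Coprime.pow_right α (Nat.coprime_comm.mp ((hp.coprime_iff_not_dvd).mpr hnd))
          have hdvq : Nat.card Y.1 ∣ q := hcop.dvd_of_dvd_mul_left hdY
          exact huniq _ (((Nat.dvd_prime hq).mp hdvq).resolve_left (hc1 Y))
        · left
          have hcop : Nat.Coprime (Nat.card X.1) (p ^ α) :=
            Nat.Coprime.pow_right α (Nat.coprime_comm.mp ((hp.coprime_iff_not_dvd).mpr hpdX))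
          have hdvq : Nat.card X.1 ∣ q := hcop.dvd_of_dvd_mul_left hdX
          exact huniq _ (((Nat.dvd_prime hq).mp hdvq).resolve_left (hc1 X))
      rcases claim A C hAC with hA | hC
      · rcases claim B C hBC with hB | hC2
        · exact hAB (Subtype.ext (hA.trans hB.symm))
        · exact hAC.1 (Subtype.ext (hA.trans hC2.symm))
      · rcases claim A D hAD with hA | hD
        · exact hAC.1 (Subtype.ext (hA.trans hC.symm))
        · exact hCD (Subtype.ext (hC.trans hD.symm))
    · -- cyclic of order pqr
      haveI := hcyc
      have hdvd3 : ∀ X : {H : Subgroup G // H ≠ ⊥ ∧ H ≠ ⊤}, Nat.card X.1 ∣ p * q * r :=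
        fun X => hcard ▸ hcd X
      have hne0 : ∀ X : {H : Subgroup G // H ≠ ⊥ ∧ H ≠ ⊤},
          (decide (p ∣ Nat.card X.1) || decide (q ∣ Nat.card X.1)
            || decide (r ∣ Nat.card X.1)) = true := by
        intro X
        obtain ⟨s, hs, hsd⟩ := Nat.exists_prime_and_dvd (hc1 X)
        rcases dvd_pqr_mem hp hq hr hs (hsd.trans (hdvd3 X)) with rfl | rfl | rfl <;>
          simp [hsd]
      have htri : ∀ X Y : {H : Subgroup G // H ≠ ⊥ ∧ H ≠ ⊤}, X ≠ Y →
          (((decide (p ∣ Nat.card X.1), decide (q ∣ Nat.card X.1),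
              decide (r ∣ Nat.card X.1)) : Bool × Bool × Bool) ==
            (decide (p ∣ Nat.card Y.1), decide (q ∣ Nat.card Y.1),
              decide (r ∣ Nat.card Y.1))) = false := by
        intro X Y hne
        by_contra h
        rw [Bool.not_eq_false, beq_iff_eq, Prod.mk.injEq, Prod.mk.injEq] at h
        obtain ⟨e1, e2, e3⟩ := h
        have hceq : Nat.card X.1 = Nat.card Y.1 :=
          eq_of_dvd_pqr hp hq hr hpq hpr hqr (hdvd3 X) (hdvd3 Y)
            (decide_eq_decide.mp e1) (decide_eq_decide.mp e2) (decide_eq_decide.mp e3)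
        exact hne (Subtype.ext (cyclic_subgroup_eq_of_card_eq hceq))
      have hco : ∀ (X Y : {H : Subgroup G // H ≠ ⊥ ∧ H ≠ ⊤}),
          (coprimeGraph G).Adj X Y → ∀ s : ℕ, s.Prime →
          (decide (s ∣ Nat.card X.1) && decide (s ∣ Nat.card Y.1)) = false := by
        intro X Y hXY s hs
        by_contra h
        rw [Bool.not_eq_false, Bool.and_eq_true, decide_eq_true_eq, decide_eq_true_eq] at h
        exact not_dvd_both hs hXY.2 h.1 h.2
      exact boolcase _ _ _ _ (hne0 A) (hne0 B) (hne0 C) (hne0 D)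
        (htri A B hAB) (htri C D hCD)
        (hco A C hAC p hp) (hco A C hAC q hq) (hco A C hAC r hr)
        (hco A D hAD p hp) (hco A D hAD q hq) (hco A D hAD r hr)
        (hco B C hBC p hp) (hco B C hBC q hq) (hco B C hBC r hr)
        (hco B D hBD p hp) (hco B D hBD q hq) (hco B D hBD r hr)
end
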